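/- Let d, K be natural numbers, t ∈ ℝ, and let α, σ : ℝ → ℝ be differentiable at t with α t ≠ 0. Define the scalars a = (deriv α t)/(α t), b = ((deriv α t)·(σ t) − (α t)·(deriv σ t))·(σ t)/(α t), f = (deriv α t)/(α t), and g² = deriv (fun s => (σ s)^2) t − 2·((deriv α t)/(α t))·(σ t)^2. Let u, u₁, …, u_K : E → E and s, s₁, …, s_K : E → E be functions on E = EuclideanSpace ℝ (Fin d), and let ω₁, …, ω_K ∈ ℝ be guidance strengths. Assume for all z ∈ E that u z = a • z + b • s z and uᵢ z = a • z + b • sᵢ z for every i. Then for all z ∈ E, the compositional guided vector field u z + ∑ᵢ ωᵢ • (uᵢ z − u z) equals the probability-flow ODE velocity with compositional score, namely f • z − (1/2)·g² • (s z + ∑ᵢ ωᵢ • (sᵢ z − s z)). -/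

import Mathlib

/-- Proposition 1 (CFGen): the compositional classifier-free-guidance vector field
`u z + ∑ i, ω i • (uᵢ z − u z)` coincides with the velocity of the probability-flow
ODE with compositional score, `f • z − (1/2)·g² • (s z + ∑ i, ω i • (sᵢ z − s z))`. -/
theorem compositional_guided_field_eq_prob_flow_velocity
    (d K : ℕ) (t : ℝ) (α σ : ℝ → ℝ)
    (hα : DifferentiableAt ℝ α t) (hσ : DifferentiableAt ℝ σ t) (hα0 : α t ≠ 0)
    (a b f g2 : ℝ)
    (ha : a = deriv α t / α t)
    (hb : b = (deriv α t * σ t - α t * deriv σ t) * σ t / α t)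
    (hf : f = deriv α t / α t)
    (hg2 : g2 = deriv (fun s => (σ s) ^ 2) t - 2 * (deriv α t / α t) * (σ t) ^ 2)
    (u : EuclideanSpace ℝ (Fin d) → EuclideanSpace ℝ (Fin d))
    (ucond : Fin K → EuclideanSpace ℝ (Fin d) → EuclideanSpace ℝ (Fin d))
    (s : EuclideanSpace ℝ (Fin d) → EuclideanSpace ℝ (Fin d))
    (scond : Fin K → EuclideanSpace ℝ (Fin d) → EuclideanSpace ℝ (Fin d))
    (ω : Fin K → ℝ)
    (hu : ∀ z, u z = a • z + b • s z)
    (hucond : ∀ i z, ucond i z = a • z + b • scond i z) :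
    ∀ z : EuclideanSpace ℝ (Fin d),
      u z + ∑ i, ω i • (ucond i z - u z)
        = f • z - ((1 / 2) * g2) • (s z + ∑ i, ω i • (scond i z - s z)) := by
  intro z
  have hd : deriv (fun x => σ x ^ 2) t = 2 * σ t * deriv σ t := by
    simpa [mul_comm, mul_assoc] using (hσ.hasDerivAt.fun_pow 2).deriv
  have hg : (1 / 2 : ℝ) * g2 = -b := by
    rw [hg2, hb, hd]; field_simp; ring
  rw [hg, hf, ← ha]
  simp only [hu, hucond]
  have hsum : ∑ i, ω i • (a • z + b • scond i z - (a • z + b • s z))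
      = b • ∑ i, ω i • (scond i z - s z) := by
    rw [Finset.smul_sum]
    exact Finset.sum_congr rfl fun i _ => by module
  rw [hsum]
  module
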